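/- arXiv:2412.09953 — 2 statements merged into one kernel-verified Lean document; each statement's English description precedes it below -/
import Mathlib

section
/- For all real numbers λ > 0 and 0 < V_o < V, the quantity 2·η(V), where η(V) := (V_o·exp(−λ·V) − V·exp(−λ·V_o) + V − V_o) / (λ²·(V − V_o)·V·V_o), satisfies 0 < 2·η(V) < 1. -/
open Real

lemma quad_exp_lt (x : ℝ) (hx : 0 < x) :
    1 < (1 + x) * Real.exp (-x) + x ^ 2 / 2 := by
  have hmono : StrictMonoOn (fun y : ℝ => (1 + y) * Real.exp (-y) + y ^ 2 / 2) (Set.Ici 0) := by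
    apply strictMonoOn_of_deriv_pos (convex_Ici 0)
    · exact ((continuous_const.add continuous_id).mul
        (Real.continuous_exp.comp continuous_neg)).add
        ((continuous_pow 2).div_const 2) |>.continuousOn
    · intro y hy
      rw [interior_Ici] at hy
      have h1 : HasDerivAt (fun y : ℝ => (1 + y)) 1 y := by
        simpa using (hasDerivAt_id y).const_add (1 : ℝ)
      have h2 : HasDerivAt (fun y : ℝ => Real.exp (-y)) (-Real.exp (-y)) y := by
        simpa [Function.comp_def] using (Real.hasDerivAt_exp (-y)).comp y (hasDerivAt_neg y)
      have h4 : HasDerivAt (fun y : ℝ => y ^ 2 / 2) y y := by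
        simpa using (hasDerivAt_pow 2 y).div_const 2
      have hd : HasDerivAt (fun y : ℝ => (1 + y) * Real.exp (-y) + y ^ 2 / 2)
          (y * (1 - Real.exp (-y))) y := by
        exact ((h1.mul h2).add h4).congr_deriv (by ring)
      rw [hd.deriv]
      have he : Real.exp (-y) < 1 := by
        rw [Real.exp_lt_one_iff]
        linarith [Set.mem_Ioi.mp hy]
      have hy' : 0 < y := hy
      nlinarith
  have h0 : (0 : ℝ) ∈ Set.Ici (0 : ℝ) := Set.self_mem_Ici
  have := hmono h0 (Set.mem_Ici.mpr hx.le) hx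
  simpa using this

lemma phi_anti : StrictAntiOn (fun x : ℝ => (1 - Real.exp (-x)) / x) (Set.Ioi 0) := by
  apply strictAntiOn_of_deriv_neg (convex_Ioi 0)
  · apply ContinuousOn.div
    · exact (continuous_const.sub (Real.continuous_exp.comp continuous_neg)).continuousOn
    · exact continuous_id.continuousOn
    · intro x hx; exact ne_of_gt hx
  · intro x hx
    rw [interior_Ioi] at hx
    have hx' : 0 < x := hx
    have h2 : HasDerivAt (fun y : ℝ => Real.exp (-y)) (-Real.exp (-x)) x := by
      simpa [Function.comp_def] using (Real.hasDerivAt_exp (-x)).comp x (hasDerivAt_neg x)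
    have hnum : HasDerivAt (fun y : ℝ => 1 - Real.exp (-y)) (Real.exp (-x)) x := by
      simpa [Pi.sub_def] using (hasDerivAt_const x (1 : ℝ)).sub h2
    have hd : HasDerivAt (fun y : ℝ => (1 - Real.exp (-y)) / y)
        ((Real.exp (-x) * x - (1 - Real.exp (-x)) * 1) / x ^ 2) x :=
      hnum.div (hasDerivAt_id x) (ne_of_gt hx')
    rw [hd.deriv]
    apply div_neg_of_neg_of_pos
    · have h1 : x + 1 < Real.exp x := Real.add_one_lt_exp (ne_of_gt hx')
      have h2 : Real.exp (-x) * Real.exp x = 1 := by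
        rw [← Real.exp_add]; simp
      nlinarith [Real.exp_pos x, Real.exp_pos (-x)]
    · positivity

lemma psi_mono : StrictMonoOn (fun x : ℝ => (1 - Real.exp (-x)) / x + x / 2) (Set.Ioi 0) := by
  apply strictMonoOn_of_deriv_pos (convex_Ioi 0)
  · apply ContinuousOn.add
    · apply ContinuousOn.div
      · exact (continuous_const.sub (Real.continuous_exp.comp continuous_neg)).continuousOn
      · exact continuous_id.continuousOn
      · intro x hx; exact ne_of_gt hx
    · exact (continuous_id.div_const 2).continuousOn
  · intro x hx
    rw [interior_Ioi] at hx
    have hx' : 0 < x := hx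
    have h2 : HasDerivAt (fun y : ℝ => Real.exp (-y)) (-Real.exp (-x)) x := by
      simpa [Function.comp_def] using (Real.hasDerivAt_exp (-x)).comp x (hasDerivAt_neg x)
    have hnum : HasDerivAt (fun y : ℝ => 1 - Real.exp (-y)) (Real.exp (-x)) x := by
      simpa [Pi.sub_def] using (hasDerivAt_const x (1 : ℝ)).sub h2
    have hd1 : HasDerivAt (fun y : ℝ => (1 - Real.exp (-y)) / y)
        ((Real.exp (-x) * x - (1 - Real.exp (-x)) * 1) / x ^ 2) x :=
      hnum.div (hasDerivAt_id x) (ne_of_gt hx')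
    have hd2 : HasDerivAt (fun y : ℝ => y / 2) (1 / 2 : ℝ) x := by
      simpa using (hasDerivAt_id x).div_const 2
    have hd := hd1.add hd2
    rw [show deriv (fun x : ℝ => (1 - Real.exp (-x)) / x + x / 2) x = _ from hd.deriv]
    have e2 : (Real.exp (-x) * x - (1 - Real.exp (-x)) * 1) / x ^ 2 + 1 / 2
        = ((1 + x) * Real.exp (-x) + x ^ 2 / 2 - 1) / x ^ 2 := by
      field_simp
      ring
    rw [e2]
    have h := quad_exp_lt x hx'
    apply div_pos (by linarith) (by positivity)

/-- The joint retention probability `2 η(V)` of two transceiver pairs in the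
Type II dual-zone hard-core process lies strictly between 0 and 1. -/
theorem typeII_two_eta_prob (lam Vo V : ℝ)
    (hlam : 0 < lam) (hVo : 0 < Vo) (hV : Vo < V) :
    0 < 2 * ((Vo * exp (-lam * V) - V * exp (-lam * Vo) + V - Vo) /
        (lam ^ 2 * (V - Vo) * V * Vo)) ∧
      2 * ((Vo * exp (-lam * V) - V * exp (-lam * Vo) + V - Vo) /
        (lam ^ 2 * (V - Vo) * V * Vo)) < 1 := by
  set a : ℝ := lam * Vo with ha_def
  set b : ℝ := lam * V with hb_def
  have ha : 0 < a := mul_pos hlam hVo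
  have hb : 0 < b := mul_pos hlam (hVo.trans hV)
  have hab : a < b := by
    unfold a b
    exact (mul_lt_mul_iff_right₀ hlam).mpr hV
  have haM : a ∈ Set.Ioi (0:ℝ) := ha
  have hbM : b ∈ Set.Ioi (0:ℝ) := hb
  -- key inequalities
  have h1 : (1 - Real.exp (-b)) / b < (1 - Real.exp (-a)) / a := phi_anti haM hbM hab
  have h2 : (1 - Real.exp (-a)) / a + a / 2 < (1 - Real.exp (-b)) / b + b / 2 :=
    psi_mono haM hbM hab
  set p : ℝ := 1 - Real.exp (-a) with hp_def
  set q : ℝ := 1 - Real.exp (-b) with hq_def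
  -- clear denominators
  have h1' : q * a < p * b := by
    have := mul_lt_mul_of_pos_right h1 (mul_pos ha hb)
    have e1 : q / b * (a * b) = q * a := by field_simp
    have e2 : p / a * (a * b) = p * b := by field_simp
    rw [e1, e2] at this
    exact this
  have h2' : 2 * p * b + a * a * b < 2 * q * a + a * b * b := by
    have := mul_lt_mul_of_pos_right h2 (mul_pos (mul_pos two_pos ha) hb)
    have e1 : (p / a + a / 2) * (2 * a * b) = 2 * p * b + a * a * b := by field_simp
    have e2 : (q / b + b / 2) * (2 * a * b) = 2 * q * a + a * b * b := by field_simp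
    rw [e1, e2] at this
    exact this
  -- rewrite exponentials in the goal
  have eq1 : exp (-lam * V) = Real.exp (-b) := by rw [hb_def, neg_mul]
  have eq2 : exp (-lam * Vo) = Real.exp (-a) := by rw [ha_def, neg_mul]
  set N : ℝ := Vo * exp (-lam * V) - V * exp (-lam * Vo) + V - Vo with hN_def
  set D : ℝ := lam ^ 2 * (V - Vo) * V * Vo with hD_def
  have hVV : 0 < V - Vo := sub_pos.mpr hV
  have hD : 0 < D := by
    rw [hD_def]
    have h0 : 0 < V := hVo.trans hV
    positivity
  have hNlam : lam * N = p * b - q * a := by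
    rw [hN_def, eq1, eq2, hp_def, hq_def, ha_def, hb_def]
    ring
  have hDlam : lam * D = a * b * b - a * a * b := by
    rw [hD_def, ha_def, hb_def]
    ring
  have hN : 0 < N := by
    have hlN : 0 < lam * N := by rw [hNlam]; linarith
    have : N = lam * N / lam := by field_simp
    rw [this]
    exact div_pos hlN hlam
  have h2N : 2 * N < D := by
    have hkey : lam * (2 * N) < lam * D := by
      have e3 : lam * (2 * N) = 2 * (p * b) - 2 * (q * a) := by
        rw [show lam * (2 * N) = 2 * (lam * N) by ring, hNlam]; ring
      rw [e3, hDlam]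
      linarith
    exact lt_of_mul_lt_mul_left hkey hlam.le
  constructor
  · have := div_pos hN hD
    linarith
  · rw [show 2 * (N / D) = 2 * N / D by ring]
    exact (div_lt_one hD).mpr h2N
end

section
/- For all real numbers λ > 0 and fixed V_o > 0, the function V ↦ η(V) := (V_o·exp(−λ·V) − V·exp(−λ·V_o) + V − V_o) / (λ²·(V − V_o)·V·V_o) is strictly decreasing on the interval (V_o, ∞). -/
open Real Set

/-- Key elementary inequality: `u² + 2u + 2 < 2·exp u` for `u > 0`. -/
lemma typeII_key_ineq {u : ℝ} (hu : 0 < u) : u ^ 2 + 2 * u + 2 < 2 * Real.exp u := by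
  have hmono : StrictMonoOn (fun v : ℝ => 2 * Real.exp v - (v ^ 2 + 2 * v + 2))
      (Ici (0 : ℝ)) := by
    apply strictMonoOn_of_deriv_pos (convex_Ici 0)
    · fun_prop
    · intro v hv
      rw [interior_Ici] at hv
      have h2 : HasDerivAt (fun v : ℝ => v ^ 2) (2 * v) v := by
        simpa using hasDerivAt_pow 2 v
      have h3 : HasDerivAt (fun v : ℝ => 2 * v) 2 v := by
        simpa using (hasDerivAt_id v).const_mul 2
      have h1 : HasDerivAt (fun v : ℝ => 2 * Real.exp v - (v ^ 2 + 2 * v + 2))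
          (2 * Real.exp v - (2 * v + 2)) v :=
        ((Real.hasDerivAt_exp v).const_mul 2).sub ((h2.add h3).add_const 2)
      rw [h1.deriv]
      have := Real.add_one_lt_exp (ne_of_gt hv)
      nlinarith
  have h0 : (0:ℝ) ∈ Ici (0:ℝ) := self_mem_Ici
  have hu' : u ∈ Ici (0:ℝ) := le_of_lt hu
  have := hmono h0 hu' hu
  simp only [Real.exp_zero] at this
  nlinarith

/-- The function `g(x) = (1 - exp(-λx))/(λx)` is strictly convex on `(0, ∞)`. -/
lemma typeII_g_strictConvex (lam : ℝ) (hlam : 0 < lam) :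
    StrictConvexOn ℝ (Ioi (0:ℝ))
      (fun x : ℝ => (1 - Real.exp (-lam * x)) / (lam * x)) := by
  set g : ℝ → ℝ := fun x => (1 - Real.exp (-lam * x)) / (lam * x) with hg
  set g1 : ℝ → ℝ := fun x =>
    (lam * x * Real.exp (-lam * x) + Real.exp (-lam * x) - 1) / (lam * x ^ 2) with hg1
  have hlam' : lam ≠ 0 := ne_of_gt hlam
  have hlin : ∀ x : ℝ, HasDerivAt (fun x : ℝ => -lam * x) (-lam) x := by
    intro x; simpa using (hasDerivAt_id x).const_mul (-lam)
  have hexp : ∀ x : ℝ, HasDerivAt (fun x : ℝ => Real.exp (-lam * x))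
      (Real.exp (-lam * x) * (-lam)) x := fun x => (hlin x).exp
  have hlinp : ∀ x : ℝ, HasDerivAt (fun x : ℝ => lam * x) lam x := by
    intro x; simpa using (hasDerivAt_id x).const_mul lam
  have hDg : ∀ x : ℝ, x ≠ 0 → HasDerivAt g (g1 x) x := by
    intro x hx
    have hnum : HasDerivAt (fun x : ℝ => 1 - Real.exp (-lam * x))
        (-(Real.exp (-lam * x) * (-lam))) x := (hexp x).const_sub 1
    have hden0 : lam * x ≠ 0 := mul_ne_zero hlam' hx
    have h := hnum.div (hlinp x) hden0
    refine h.congr_deriv ?_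
    simp only [hg1]
    field_simp
    ring
  have hDg1 : ∀ x : ℝ, x ≠ 0 → HasDerivAt g1
      ((2 - Real.exp (-lam * x) * ((lam * x) ^ 2 + 2 * (lam * x) + 2)) / (lam * x ^ 3)) x := by
    intro x hx
    have hnum : HasDerivAt (fun x : ℝ => lam * x * Real.exp (-lam * x) + Real.exp (-lam * x) - 1)
        ((lam * (Real.exp (-lam * x)) + lam * x * (Real.exp (-lam * x) * (-lam)))
          + Real.exp (-lam * x) * (-lam)) x :=
      (((hlinp x).mul (hexp x)).add (hexp x)).sub_const 1
    have hden : HasDerivAt (fun x : ℝ => lam * x ^ 2) (lam * (2 * x)) x := by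
      have h2 : HasDerivAt (fun x : ℝ => x ^ 2) (2 * x) x := by
        simpa using hasDerivAt_pow 2 x
      exact h2.const_mul lam
    have hden0 : lam * x ^ 2 ≠ 0 := mul_ne_zero hlam' (pow_ne_zero 2 hx)
    have h := hnum.div hden hden0
    refine h.congr_deriv ?_
    field_simp
    ring
  apply strictConvexOn_of_deriv2_pos (convex_Ioi 0)
  · apply ContinuousOn.div
    · fun_prop
    · fun_prop
    · intro x hx
      exact mul_ne_zero hlam' (ne_of_gt hx)
  · intro x hx
    rw [interior_Ioi] at hx
    have hxpos : (0:ℝ) < x := hx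
    have hx0 : x ≠ 0 := ne_of_gt hxpos
    have hEq : deriv g =ᶠ[nhds x] g1 := by
      filter_upwards [isOpen_ne_fun continuous_id continuous_const |>.mem_nhds hx0] with y hy
      exact (hDg y hy).deriv
    have h2 : deriv (deriv g) x = deriv g1 x := hEq.deriv_eq
    have h3 : deriv^[2] g x =
        (2 - Real.exp (-lam * x) * ((lam * x) ^ 2 + 2 * (lam * x) + 2)) / (lam * x ^ 3) := by
      rw [Function.iterate_succ, Function.iterate_one, Function.comp_apply, h2,
        (hDg1 x hx0).deriv]
    rw [h3]
    apply div_pos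
    · have hu : 0 < lam * x := mul_pos hlam hxpos
      have hkey := typeII_key_ineq hu
      have hre : Real.exp (-lam * x) = (Real.exp (lam * x))⁻¹ := by
        rw [← Real.exp_neg]; ring_nf
      rw [hre]
      have he : 0 < Real.exp (lam * x) := Real.exp_pos _
      rw [sub_pos, inv_mul_lt_iff₀ he]
      linarith
    · positivity

/-- For fixed `lam > 0` and `Vo > 0`, the joint retention probability factor
`η(V)` is strictly decreasing in the combined exclusion area `V` on `(Vo, ∞)`. -/
theorem typeII_eta_strictAnti (lam Vo : ℝ) (hlam : 0 < lam) (hVo : 0 < Vo) :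
    StrictAntiOn
      (fun V : ℝ =>
        (Vo * exp (-lam * V) - V * exp (-lam * Vo) + V - Vo) /
          (lam ^ 2 * (V - Vo) * V * Vo))
      (Ioi Vo) := by
  set g : ℝ → ℝ := fun x => (1 - Real.exp (-lam * x)) / (lam * x) with hg
  have hconv := typeII_g_strictConvex lam hlam
  have hlam' : lam ≠ 0 := ne_of_gt hlam
  have hVo' : Vo ≠ 0 := ne_of_gt hVo
  have hEta : ∀ V : ℝ, V ∈ Ioi Vo →
      (Vo * exp (-lam * V) - V * exp (-lam * Vo) + V - Vo) /
          (lam ^ 2 * (V - Vo) * V * Vo)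
        = -(1 / lam) * ((g V - g Vo) / (V - Vo)) := by
    intro V hV
    have hVpos : 0 < V := lt_trans hVo hV
    have hV0 : V ≠ 0 := ne_of_gt hVpos
    have hVVo : V - Vo ≠ 0 := sub_ne_zero.mpr (ne_of_gt hV)
    simp only [hg]
    field_simp
    ring
  intro x hx y hy hxy
  have hx0 : x ∈ Ioi (0:ℝ) := lt_trans hVo hx
  have hy0 : y ∈ Ioi (0:ℝ) := lt_trans hVo hy
  have hVo0 : Vo ∈ Ioi (0:ℝ) := hVo
  have hsec := hconv.secant_strict_mono hVo0 hx0 hy0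
    (ne_of_gt hx) (ne_of_gt hy) hxy
  simp only [hEta x hx, hEta y hy]
  have hinv : 0 < 1 / lam := by positivity
  nlinarith [hsec]
end
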